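/- Two-point coset bound for Hermitian codes (Corollary 2, part 2, in concrete form). Let q be a prime power, F a finite field with q^2 elements, S = {(x,y) ∈ F × F : y^q + y = x^{q+1}}, and S* = S \ {(0,0)} (so |S*| = q^3 − 1; note y ≠ 0 at every point of S*). For an integer i, let E'(i) ⊆ F^{S*} be the F-linear span of the evaluation vectors ((P ↦ x(P)^α y(P)^β))_{P ∈ S*} over all integers α, β with 0 ≤ α ≤ q, β ≥ −1, qα + (q+1)β ≤ i, and α + (q+1)β ≥ −1. Let i be an integer and write i = (d+q−2)(q+1) − a for the unique integers d ∈ ℤ and 0 ≤ a ≤ q. Suppose c ∈ F^{S*} satisfies c·v = 0 for every v ∈ E'(i), but c·w ≠ 0 for some w ∈ E'(i+1). Then the Hamming weight of c is at least (q+1)d − a + 1 if a − d − 1 < 0, and at least a(q − a + d) if 0 ≤ a − d − 1 ≤ q−1. -/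

import Mathlib

/-- The affine points of the Hermitian curve `y^q + y = x^(q+1)` over `F`,
with the origin removed. -/
abbrev HermitianPoints' (q : ℕ) (F : Type*) [Field F] : Type _ :=
  {p : F × F // p.2 ^ q + p.2 = p.1 ^ (q + 1) ∧ p ≠ (0, 0)}

/-- The two-point evaluation code `C_L(D, iP + Q)`: the `F`-span in `F^{S*}` of
the evaluations of the monomials `x^α y^β` with `0 ≤ α ≤ q`, `β ≥ -1`,
pole order `qα + (q+1)β ≤ i` at the point at infinity `P`, and
`α + (q+1)β ≥ -1` (pole order at most `1` at the origin `Q`). -/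
def hermitianTwoPointCode (q : ℕ) (F : Type*) [Field F] (i : ℤ) :
    Submodule F (HermitianPoints' q F → F) :=
  Submodule.span F {v | ∃ (α : ℕ) (β : ℤ), α ≤ q ∧ -1 ≤ β ∧
    ((q : ℤ) * α + (q + 1) * β ≤ i) ∧ (-1 ≤ (α : ℤ) + (q + 1) * β) ∧
    v = fun P => (P.1.1) ^ α * (P.1.2) ^ β}

open Finset in
lemma coset_core {F : Type*} [Field F] [DecidableEq F] {Pt : Type*} [Fintype Pt]
    (c : Pt → F) {ι : Type*} [Fintype ι] [DecidableEq ι]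
    (r : ι → ℤ) (hinj : Function.Injective r) (f g : ι → Pt → F)
    (h0 : ∀ j k, r j < r k → ∑ P, c P * (f j P * g k P) = 0)
    (h1 : ∀ j, ∑ P, c P * (f j P * g j P) ≠ 0) :
    Fintype.card ι ≤ Nat.card {P : Pt // c P ≠ 0} := by
  classical
  letI : LinearOrder ι := LinearOrder.lift' r hinj
  have hle : ∀ j k : ι, j ≤ k ↔ r j ≤ r k := fun _ _ => Iff.rfl
  have hlt : ∀ j k : ι, j < k ↔ r j < r k := by
    intro j k
    rw [lt_iff_le_not_ge, hle, hle, ← lt_iff_le_not_ge]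
  set M : Matrix ι ι F := fun j k => ∑ P, c P * (f j P * g k P) with hM
  have htri : M.BlockTriangular OrderDual.toDual := by
    intro j k h
    exact h0 j k ((hlt j k).1 h)
  have hdet : IsUnit M.det := by
    rw [Matrix.det_of_lowerTriangular M htri]
    exact (Finset.prod_ne_zero_iff.2 fun j _ => h1 j).isUnit
  have hMinj : Function.Injective M.vecMul :=
    Matrix.vecMul_injective_iff_isUnit.2 ((Matrix.isUnit_iff_isUnit_det M).2 hdet)
  have hsum : ∀ h : Pt → F, ∑ P, c P * h P = ∑ P : {P : Pt // c P ≠ 0}, c P.1 * h P.1 := by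
    intro h
    rw [← Finset.sum_filter_of_ne (p := fun P => c P ≠ 0)
      (fun P _ hne hc => hne (by rw [hc, zero_mul]))]
    exact Finset.sum_subtype _ (by simp) _
  let φ : (ι → F) →ₗ[F] ({P : Pt // c P ≠ 0} → F) :=
    { toFun := fun l => fun P => ∑ j, l j * (c P.1 * f j P.1)
      map_add' := by
        intro l₁ l₂
        funext P
        simp [add_mul, Finset.sum_add_distrib]
      map_smul' := by
        intro t l
        funext P
        simp [Finset.mul_sum, mul_assoc] }
  have key : ∀ l k, Matrix.vecMul l M k = ∑ P : {P : Pt // c P ≠ 0}, φ l P * g k P.1 := by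
    intro l k
    have : ∀ j, l j * M j k = ∑ P : {P : Pt // c P ≠ 0}, l j * (c P.1 * f j P.1) * g k P.1 := by
      intro j
      rw [hM]
      simp only
      rw [hsum (fun P => f j P * g k P), Finset.mul_sum]
      congr 1
      funext P
      ring
    unfold Matrix.vecMul dotProduct
    simp only [this]
    rw [Finset.sum_comm]
    congr 1
    funext P
    simp only [φ, LinearMap.coe_mk, AddHom.coe_mk, Finset.sum_mul]
  have hφ : Function.Injective φ := by
    rw [← LinearMap.ker_eq_bot, LinearMap.ker_eq_bot']
    intro l hl
    apply hMinj
    show Matrix.vecMul l M = Matrix.vecMul 0 M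
    rw [Matrix.zero_vecMul]
    funext k
    rw [key l k]
    simp only [hl, Pi.zero_apply, zero_mul, Finset.sum_const_zero]
  have := LinearMap.finrank_le_finrank_of_injective hφ
  rw [Module.finrank_pi, Module.finrank_pi] at this
  rwa [Nat.card_eq_fintype_card]




namespace HermAux

variable {q : ℕ} {F : Type*} [Field F]

/-- monomial as a function on the pointed curve -/
def mono (q : ℕ) (F : Type*) [Field F] (u : ℕ) (v : ℤ) : HermitianPoints' q F → F :=
  fun P => (P.1.1) ^ u * (P.1.2) ^ v

lemma y_ne (hq1 : 1 ≤ q) (P : HermitianPoints' q F) : P.1.2 ≠ 0 := by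
  intro h
  have hc := P.2.1
  rw [h] at hc
  have h0 : (0:F) ^ q = 0 := zero_pow (by omega)
  rw [h0, add_zero] at hc
  have hx : P.1.1 = 0 := by
    have := hc.symm
    exact pow_eq_zero_iff (n := q+1) (by omega) |>.1 this
  exact P.2.2 (by
    have : P.1 = ((0:F), (0:F)) := Prod.ext hx h
    exact this)

lemma mono_mul (hq1 : 1 ≤ q) (u u' : ℕ) (v v' : ℤ) (P : HermitianPoints' q F) :
    mono q F u v P * mono q F u' v' P = mono q F (u + u') (v + v') P := by
  unfold mono
  rw [pow_add, zpow_add₀ (y_ne hq1 P)]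
  ring

lemma mono_reduce (hq1 : 1 ≤ q) (A : ℕ) (B : ℤ) (hA : q + 1 ≤ A)
    (P : HermitianPoints' q F) :
    mono q F A B P = mono q F (A - (q+1)) (B + q) P + mono q F (A - (q+1)) (B + 1) P := by
  have hy := y_ne hq1 P
  have hc := P.2.1
  unfold mono
  have hx : (P.1.1) ^ A = (P.1.1) ^ (A - (q+1)) * (P.1.2 ^ q + P.1.2) := by
    rw [hc, ← pow_add]
    congr 1
    omega
  rw [hx]
  have h1 : (P.1.2 : F) ^ (B + (q:ℤ)) = P.1.2 ^ B * P.1.2 ^ q := by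
    rw [zpow_add₀ hy, zpow_natCast]
  have h2 : (P.1.2 : F) ^ (B + 1) = P.1.2 ^ B * P.1.2 := by
    rw [zpow_add₀ hy, zpow_one]
  rw [h1, h2]
  ring

lemma mem_code (i : ℤ) (A : ℕ) (B : ℤ) (hA : A ≤ q) (hB : -1 ≤ B)
    (hrho : (q:ℤ) * A + ((q:ℤ) + 1) * B ≤ i) (hsig : -1 ≤ (A:ℤ) + ((q:ℤ) + 1) * B) :
    mono q F A B ∈ hermitianTwoPointCode q F i :=
  Submodule.subset_span ⟨A, B, hA, hB, hrho, hsig, rfl⟩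

lemma mem_code' (hq2 : 2 ≤ q) (i : ℤ) (A : ℕ) (B : ℤ) (hA : A ≤ 2*q + 1) (hB : -1 ≤ B)
    (hrho : (q:ℤ) * A + ((q:ℤ) + 1) * B ≤ i) (hsig : -1 ≤ (A:ℤ) + ((q:ℤ) + 1) * B) :
    mono q F A B ∈ hermitianTwoPointCode q F i := by
  by_cases hAq : A ≤ q
  · exact mem_code i A B hAq hB hrho hsig
  · push_neg at hAq
    have hA1 : q + 1 ≤ A := hAq
    have heq : mono q F A B = fun P =>
        mono q F (A - (q+1)) (B + q) P + mono q F (A - (q+1)) (B + 1) P :=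
      funext fun P => mono_reduce (by omega) A B hA1 P
    rw [heq]
    have hcast : ((A - (q+1) : ℕ) : ℤ) = (A:ℤ) - (q+1) := by
      push_cast [Nat.cast_sub hA1]; ring
    have hq2' : (2:ℤ) ≤ (q:ℤ) := by exact_mod_cast hq2
    have hadd : (fun P => mono q F (A - (q+1)) (B + q) P + mono q F (A - (q+1)) (B + 1) P)
        = mono q F (A - (q+1)) (B + q) + mono q F (A - (q+1)) (B + 1) := rfl
    rw [hadd]
    apply Submodule.add_mem
    · apply mem_code i _ _ (by omega) (by omega)
      · rw [hcast]; push_cast; nlinarith [hrho]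
      · rw [hcast]; push_cast; nlinarith [hsig, hq2']
    · apply mem_code i _ _ (by omega) (by omega)
      · rw [hcast]; push_cast; nlinarith [hrho, hq2']
      · rw [hcast]; push_cast; nlinarith [hsig]

lemma exp_unique (hq1 : 1 ≤ q) {α α₀ : ℕ} {β β₀ : ℤ} (hα : α ≤ q) (hα₀ : α₀ ≤ q)
    (h : (q:ℤ) * α + ((q:ℤ) + 1) * β = (q:ℤ) * α₀ + ((q:ℤ) + 1) * β₀) :
    α = α₀ ∧ β = β₀ := by
  have hdvd : ((q:ℤ) + 1) ∣ (q:ℤ) * ((α:ℤ) - α₀) := ⟨β₀ - β, by linear_combination h⟩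
  have hcop : IsCoprime ((q:ℤ) + 1) (q:ℤ) := ⟨1, -1, by ring⟩
  have h1 : ((q:ℤ) + 1) ∣ ((α:ℤ) - α₀) := hcop.dvd_of_dvd_mul_left hdvd
  obtain ⟨k, hk⟩ := h1
  have hq1' : (1:ℤ) ≤ (q:ℤ) := by exact_mod_cast hq1
  have hαb : (α:ℤ) ≤ q := by exact_mod_cast hα
  have hαb₀ : (α₀:ℤ) ≤ q := by exact_mod_cast hα₀
  have hk0 : k = 0 := by
    rcases lt_trichotomy k 0 with hh | hh | hh
    · exfalso; nlinarith [Int.natCast_nonneg α, Int.natCast_nonneg α₀]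
    · exact hh
    · exfalso; nlinarith [Int.natCast_nonneg α, Int.natCast_nonneg α₀]
  rw [hk0, mul_zero] at hk
  have hαα : α = α₀ := by
    have : (α:ℤ) = α₀ := by omega
    exact_mod_cast this
  refine ⟨hαα, ?_⟩
  subst hαα
  have : ((q:ℤ) + 1) * β = ((q:ℤ) + 1) * β₀ := by linarith [h]
  exact mul_left_cancel₀ (by omega) this

lemma Lm_ne {q : ℕ} {F : Type*} [Field F] [Fintype F] [Fintype (HermitianPoints' q F)]
    (hq1 : 1 ≤ q) (i : ℤ) (c : HermitianPoints' q F → F)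
    (hker : ∀ v ∈ hermitianTwoPointCode q F i, ∑ P, c P * v P = 0)
    (hnz : ∃ w ∈ hermitianTwoPointCode q F (i + 1), ∑ P, c P * w P ≠ 0)
    (α₀ : ℕ) (β₀ : ℤ) (hα : α₀ ≤ q)
    (hrho : (q:ℤ) * α₀ + ((q:ℤ) + 1) * β₀ = i + 1) :
    ∑ P, c P * mono q F α₀ β₀ P ≠ 0 := by
  obtain ⟨w, hw, hLw⟩ := hnz
  have hsub : hermitianTwoPointCode q F (i+1) ≤
      hermitianTwoPointCode q F i ⊔ Submodule.span F {mono q F α₀ β₀} := by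
    unfold hermitianTwoPointCode
    apply Submodule.span_le.2
    rintro v ⟨α, β, hαq, hβ, hρ', hσ, rfl⟩
    rcases lt_or_ge ((q:ℤ) * α + ((q:ℤ) + 1) * β) (i+1) with h | h
    · exact Submodule.mem_sup_left
        (Submodule.subset_span ⟨α, β, hαq, hβ, by omega, hσ, rfl⟩)
    · have heq : (q:ℤ) * α + ((q:ℤ) + 1) * β = (q:ℤ) * α₀ + ((q:ℤ) + 1) * β₀ := by
        rw [hrho]; omega
      obtain ⟨h1, h2⟩ := exp_unique hq1 hαq hα heq
      subst h1; subst h2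
      exact Submodule.mem_sup_right (Submodule.subset_span rfl)
  have hw' := hsub hw
  rw [Submodule.mem_sup] at hw'
  obtain ⟨u, hu, z, hz, rfl⟩ := hw'
  rw [Submodule.mem_span_singleton] at hz
  obtain ⟨t, rfl⟩ := hz
  intro hm
  apply hLw
  have : ∀ P : HermitianPoints' q F, c P * (u + t • mono q F α₀ β₀) P
      = c P * u P + t * (c P * mono q F α₀ β₀ P) := by
    intro P
    simp [Pi.add_apply, Pi.smul_apply, smul_eq_mul]
    ring
  rw [Finset.sum_congr rfl (fun P _ => this P), Finset.sum_add_distrib,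
    ← Finset.mul_sum, hker u hu, hm, mul_zero, add_zero]

lemma case1 (q : ℕ) (F : Type*) [Field F] [Fintype F] [DecidableEq F]
    (hq2 : 2 ≤ q) (i d a : ℤ) (hi : i = (d + q - 2) * (q + 1) - a)
    (ha0 : 0 ≤ a) (haq : a ≤ q)
    (c : HermitianPoints' q F → F)
    (hker : ∀ v ∈ hermitianTwoPointCode q F i, ∑ P, c P * v P = 0)
    (hnz : ∃ w ∈ hermitianTwoPointCode q F (i + 1), ∑ P, c P * w P ≠ 0)
    (hda : a ≤ d) :
    ((q:ℤ) + 1) * d - a + 1 ≤ (Nat.card {P : HermitianPoints' q F // c P ≠ 0} : ℤ) := by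
  have hq1 : 1 ≤ q := by omega
  set A : ℕ := a.toNat with hAdef
  have hA : (A:ℤ) = a := Int.toNat_of_nonneg ha0
  have hAq : A ≤ q := by omega
  set B1 : ℕ := (d + (q:ℤ) - a).toNat with hB1def
  have hB1 : (B1:ℤ) = d + (q:ℤ) - a := Int.toNat_of_nonneg (by omega)
  set B2 : ℕ := (d - a).toNat with hB2def
  have hB2 : (B2:ℤ) = d - a := Int.toNat_of_nonneg (by omega)
  set Q1 : ℕ := q + 1 - A with hQ1def
  have hQ1 : (Q1:ℤ) = (q:ℤ) + 1 - a := by omega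
  set ι := (Fin A × Fin B1) ⊕ ((Fin Q1 × Fin B2) ⊕ Unit) with hιdef
  let pt : ι → ℕ × ℤ := fun j =>
    match j with
    | .inl (u, v) => (u.1, (v.1 : ℤ))
    | .inr (.inl (u, v)) => (A + u.1, (v.1 : ℤ))
    | .inr (.inr _) => (A, d - a)
  let cm : ι → ℕ × ℤ := fun j =>
    match j with
    | .inl _ => (A - 1, d + q - 1 - a)
    | .inr _ => (A + q, d - 1 - a)
  let r : ι → ℤ := fun j => (q:ℤ) * (pt j).1 + ((q:ℤ) + 1) * (pt j).2
  let f : ι → HermitianPoints' q F → F := fun j => mono q F (pt j).1 (pt j).2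
  let g : ι → HermitianPoints' q F → F :=
    fun k => mono q F ((cm k).1 - (pt k).1) ((cm k).2 - (pt k).2)
  -- row facts
  have hr1 : ∀ j : ι, (pt j).1 ≤ q := by
    rintro (⟨u, v⟩ | ⟨⟨u, v⟩ | ⟨⟩⟩) <;> simp only [pt]
    · have := u.isLt; omega
    · have := u.isLt; omega
    · omega
  have hr2 : ∀ j : ι, 0 ≤ (pt j).2 := by
    rintro (⟨u, v⟩ | ⟨⟨u, v⟩ | ⟨⟩⟩) <;> simp only [pt]
    · positivity
    · positivity
    · omega
  -- column facts
  have hcol : ∀ k : ι, (pt k).1 ≤ (cm k).1 ∧ (cm k).1 - (pt k).1 ≤ q := by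
    rintro (⟨u, v⟩ | ⟨⟨u, v⟩ | ⟨⟩⟩) <;> simp only [pt, cm]
    · have := u.isLt; omega
    · have := u.isLt; omega
    · omega
  have hc2 : ∀ k : ι, -1 ≤ (cm k).2 - (pt k).2 := by
    rintro (⟨u, v⟩ | ⟨⟨u, v⟩ | ⟨⟩⟩) <;> simp only [pt, cm]
    · have hv : ((v.1 : ℕ) : ℤ) < (B1 : ℤ) := by exact_mod_cast v.isLt
      omega
    · have hv : ((v.1 : ℕ) : ℤ) < (B2 : ℤ) := by exact_mod_cast v.isLt
      omega
    · omega
  have hc3 : ∀ k : ι, (q:ℤ) * ((cm k).1 : ℤ) + ((q:ℤ) + 1) * (cm k).2 = i + 1 := by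
    rintro (⟨u, v⟩ | ⟨⟨u, v⟩ | ⟨⟩⟩) <;> simp only [pt, cm]
    · have hA1 : 1 ≤ A := by have := u.isLt; omega
      have hcast : ((A - 1 : ℕ) : ℤ) = a - 1 := by omega
      rw [hcast, hi]; ring
    · have hcast : ((A + q : ℕ) : ℤ) = a + q := by omega
      rw [hcast, hi]; ring
    · have hcast : ((A + q : ℕ) : ℤ) = a + q := by omega
      rw [hcast, hi]; ring
  have hc4 : ∀ k : ι, -1 ≤ ((cm k).1 : ℤ) - ((pt k).1 : ℤ)
      + ((q:ℤ) + 1) * ((cm k).2 - (pt k).2) := by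
    rintro (⟨u, v⟩ | ⟨⟨u, v⟩ | ⟨⟩⟩) <;> simp only [pt, cm]
    · have hA1 : 1 ≤ A := by have := u.isLt; omega
      have hu : (u.1 : ℤ) ≤ (A : ℤ) - 1 := by have := u.isLt; omega
      have hv : ((v.1 : ℕ) : ℤ) ≤ d + q - 1 - a := by
        have : ((v.1 : ℕ) : ℤ) < (B1 : ℤ) := by exact_mod_cast v.isLt
        omega
      have h5 : (0:ℤ) ≤ ((q:ℤ) + 1) * ((d + q - 1 - a) - (v.1 : ℤ)) := by
        apply mul_nonneg (by positivity); omega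
      have hcast : ((A - 1 : ℕ) : ℤ) = a - 1 := by omega
      rw [hcast]; omega
    · have hu : (u.1 : ℤ) ≤ (q:ℤ) - a := by
        have : ((u.1 : ℕ) : ℤ) < (Q1 : ℤ) := by exact_mod_cast u.isLt
        omega
      have hv : ((v.1 : ℕ) : ℤ) ≤ d - 1 - a := by
        have : ((v.1 : ℕ) : ℤ) < (B2 : ℤ) := by exact_mod_cast v.isLt
        omega
      have h5 : (0:ℤ) ≤ ((q:ℤ) + 1) * ((d - 1 - a) - (v.1 : ℤ)) := by
        apply mul_nonneg (by positivity); omega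
      have hcast : ((A + q : ℕ) : ℤ) = a + q := by omega
      rw [hcast]; omega
    · have hcast : ((A + q : ℕ) : ℤ) = a + q := by omega
      rw [hcast]
      have : ((q:ℤ) + 1) * ((d - 1 - a) - (d - a)) = -((q:ℤ)+1) := by ring
      rw [this]; omega
  -- injectivity of r
  have rinj : Function.Injective r := by
    intro j k h
    obtain ⟨e1, e2⟩ := exp_unique hq1 (hr1 j) (hr1 k) h
    rcases j with ⟨u, v⟩ | ⟨⟨u, v⟩ | ⟨⟩⟩ <;> rcases k with ⟨u', v'⟩ | ⟨⟨u', v'⟩ | ⟨⟩⟩ <;>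
      simp only [pt] at e1 e2
    · exact congrArg Sum.inl (Prod.ext (Fin.ext e1) (Fin.ext (by exact_mod_cast e2)))
    · exfalso; have := u.isLt; have := u'.isLt; omega
    · exfalso
      have h1 : ((v.1 : ℕ) : ℤ) < (B1 : ℤ) := by exact_mod_cast v.isLt
      have := u.isLt; omega
    · exfalso; have := u.isLt; have := u'.isLt; omega
    · refine congrArg (Sum.inr ∘ Sum.inl)
        (Prod.ext (Fin.ext ?_) (Fin.ext (by exact_mod_cast e2)))
      have e1' : A + u.1 = A + u'.1 := e1
      show u.1 = u'.1
      omega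
    · exfalso
      have h1 : ((v.1 : ℕ) : ℤ) < (B2 : ℤ) := by exact_mod_cast v.isLt
      omega
    · exfalso
      have h1 : ((v'.1 : ℕ) : ℤ) < (B1 : ℤ) := by exact_mod_cast v'.isLt
      have := u'.isLt; omega
    · exfalso
      have h1 : ((v'.1 : ℕ) : ℤ) < (B2 : ℤ) := by exact_mod_cast v'.isLt
      omega
    · rfl
  -- triangularity
  have h0 : ∀ j k, r j < r k → ∑ P, c P * (f j P * g k P) = 0 := by
    intro j k hjk
    have hprod : ∀ P, f j P * g k P =
        mono q F ((pt j).1 + ((cm k).1 - (pt k).1)) ((pt j).2 + ((cm k).2 - (pt k).2)) P :=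
      fun P => mono_mul hq1 _ _ _ _ P
    rw [Finset.sum_congr rfl (fun P _ => by rw [hprod P])]
    apply hker
    have hcast : (((pt j).1 + ((cm k).1 - (pt k).1) : ℕ) : ℤ)
        = ((pt j).1 : ℤ) + (((cm k).1 : ℤ) - ((pt k).1 : ℤ)) := by
      have := (hcol k).1; omega
    apply mem_code' hq2
    · have := hr1 j; have := (hcol k).2; omega
    · have := hr2 j; have := hc2 k; omega
    · rw [hcast]
      have hid : (q:ℤ) * (((pt j).1 : ℤ) + (((cm k).1 : ℤ) - ((pt k).1 : ℤ)))
          + ((q:ℤ) + 1) * ((pt j).2 + ((cm k).2 - (pt k).2))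
          = (i + 1) + (r j - r k) := by
        simp only [r]
        linear_combination hc3 k
      rw [hid]
      have : r j < r k := hjk
      linarith
    · rw [hcast]
      have h4 : (0:ℤ) ≤ ((q:ℤ) + 1) * (pt j).2 := mul_nonneg (by positivity) (hr2 j)
      have hdist : ((q:ℤ) + 1) * ((pt j).2 + ((cm k).2 - (pt k).2))
          = ((q:ℤ) + 1) * (pt j).2 + ((q:ℤ) + 1) * ((cm k).2 - (pt k).2) := by ring
      have h6 := hc4 k
      have h7 : (0:ℤ) ≤ ((pt j).1 : ℤ) := Int.natCast_nonneg _
      linarith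
  -- nonzero diagonal
  have h1 : ∀ j, ∑ P, c P * (f j P * g j P) ≠ 0 := by
    intro j
    have hprod : ∀ P, f j P * g j P = mono q F (cm j).1 (cm j).2 P := by
      intro P
      rw [mono_mul hq1]
      congr 1
      · have := (hcol j).1; omega
      · ring
    rw [Finset.sum_congr rfl (fun P _ => by rw [hprod P])]
    rcases j with ⟨u, v⟩ | j'
    · have hA1 : 1 ≤ A := by have := u.isLt; omega
      have hcast : ((A - 1 : ℕ) : ℤ) = a - 1 := by omega
      apply Lm_ne hq1 i c hker hnz (A - 1) (d + q - 1 - a) (by omega)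
      rw [hcast, hi]; push_cast; ring
    · simp only [cm]
      by_cases hA0 : A = 0
      · apply Lm_ne hq1 i c hker hnz (A + q) (d - 1 - a) (by omega)
        have hcast : ((A + q : ℕ) : ℤ) = a + q := by omega
        rw [hcast, hi]; push_cast; ring
      · have hA1 : 1 ≤ A := by omega
        have hred : ∀ P, mono q F (A + q) (d - 1 - a) P
            = mono q F (A - 1) (d + q - 1 - a) P + mono q F (A - 1) (d - a) P := by
          intro P
          have hr := mono_reduce hq1 (A + q) (d - 1 - a) (by omega) P
          rw [show A - 1 = A + q - (q + 1) from by omega,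
            show d + (q:ℤ) - 1 - a = (d - 1 - a) + (q:ℤ) from by ring,
            show d - a = (d - 1 - a) + 1 from by ring]
          exact hr
        rw [Finset.sum_congr rfl (fun P _ => by
          rw [hred P, mul_add])]
        rw [Finset.sum_add_distrib]
        have hcomp : ∑ P, c P * mono q F (A - 1) (d - a) P = 0 := by
          apply hker
          apply mem_code i (A - 1) (d - a) (by omega) (by omega)
          · have hcast : ((A - 1 : ℕ) : ℤ) = a - 1 := by omega
            rw [hcast]
            have hqq : (2:ℤ) ≤ (q:ℤ) := by exact_mod_cast hq2
            nlinarith [hi]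
          · have hcast : ((A - 1 : ℕ) : ℤ) = a - 1 := by omega
            rw [hcast]
            have : (0:ℤ) ≤ ((q:ℤ) + 1) * (d - a) := mul_nonneg (by positivity) (by omega)
            omega
        rw [hcomp, add_zero]
        have hcast : ((A - 1 : ℕ) : ℤ) = a - 1 := by omega
        apply Lm_ne hq1 i c hker hnz (A - 1) (d + q - 1 - a) (by omega)
        rw [hcast, hi]; push_cast; ring
  have hcore := coset_core c r rinj f g h0 h1
  have hcard : Fintype.card ι = A * B1 + (Q1 * B2 + 1) := by
    simp [hιdef]
  rw [hcard] at hcore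
  have hval : ((A * B1 + (Q1 * B2 + 1) : ℕ) : ℤ) = ((q:ℤ) + 1) * d - a + 1 := by
    push_cast
    rw [hA, hB1, hB2, hQ1]
    ring
  rw [← hval]
  exact_mod_cast hcore

end HermAux

namespace HermAux

lemma case2 (q : ℕ) (F : Type*) [Field F] [Fintype F] [DecidableEq F]
    (hq2 : 2 ≤ q) (i d a : ℤ) (hi : i = (d + q - 2) * (q + 1) - a)
    (ha0 : 0 ≤ a) (haq : a ≤ q)
    (c : HermitianPoints' q F → F)
    (hker : ∀ v ∈ hermitianTwoPointCode q F i, ∑ P, c P * v P = 0)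
    (hnz : ∃ w ∈ hermitianTwoPointCode q F (i + 1), ∑ P, c P * w P ≠ 0)
    (ha1 : 1 ≤ a) (he1 : 1 ≤ (q:ℤ) - a + d) :
    a * ((q:ℤ) - a + d) ≤ (Nat.card {P : HermitianPoints' q F // c P ≠ 0} : ℤ) := by
  have hq1 : 1 ≤ q := by omega
  set A : ℕ := a.toNat with hAdef
  have hA : (A:ℤ) = a := Int.toNat_of_nonneg ha0
  have hAq : A ≤ q := by omega
  have hA1 : 1 ≤ A := by omega
  set E : ℕ := ((q:ℤ) - a + d).toNat with hEdef
  have hE : (E:ℤ) = (q:ℤ) - a + d := Int.toNat_of_nonneg (by omega)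
  -- the unique top monomial
  have hμρ : (q:ℤ) * (a - 1) + ((q:ℤ) + 1) * (d + q - 1 - a) = i + 1 := by
    rw [hi]; ring
  have hμρ' : (q:ℤ) * ((A - 1 : ℕ) : ℤ) + ((q:ℤ) + 1) * (d + q - 1 - a) = i + 1 := by
    have : ((A - 1 : ℕ) : ℤ) = a - 1 := by omega
    rw [this]; exact hμρ
  set ι := Fin A × Fin E with hιdef
  let pt : ι → ℕ × ℤ := fun j => (j.1.1, (j.2.1 : ℤ))
  let r : ι → ℤ := fun j => (q:ℤ) * (pt j).1 + ((q:ℤ) + 1) * (pt j).2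
  let f : ι → HermitianPoints' q F → F := fun j => mono q F (pt j).1 (pt j).2
  let g : ι → HermitianPoints' q F → F :=
    fun k => mono q F ((A - 1) - (pt k).1) ((d + q - 1 - a) - (pt k).2)
  have hub : ∀ j : ι, (pt j).1 ≤ A - 1 := fun j => by
    simp only [pt]; have := j.1.isLt; omega
  have hvb : ∀ j : ι, 0 ≤ (pt j).2 ∧ (pt j).2 ≤ (q:ℤ) - a + d - 1 := fun j => by
    simp only [pt]
    have h1 : ((j.2.1 : ℕ) : ℤ) < (E : ℤ) := by exact_mod_cast j.2.isLt
    constructor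
    · positivity
    · omega
  have rinj : Function.Injective r := by
    intro j k h
    obtain ⟨h1, h2⟩ := exp_unique hq1 (le_trans (hub j) (by omega))
      (le_trans (hub k) (by omega)) h
    simp only [pt] at h1
    have h2' : j.2.1 = k.2.1 := by simp only [pt] at h2; exact_mod_cast h2
    exact Prod.ext (Fin.ext h1) (Fin.ext h2')
  have h0 : ∀ j k, r j < r k → ∑ P, c P * (f j P * g k P) = 0 := by
    intro j k hjk
    have hprod : ∀ P, f j P * g k P =
        mono q F ((pt j).1 + ((A - 1) - (pt k).1)) ((pt j).2 + ((d + q - 1 - a) - (pt k).2)) P :=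
      fun P => mono_mul hq1 _ _ _ _ P
    rw [Finset.sum_congr rfl (fun P _ => by rw [hprod P])]
    apply hker
    have hcast : (((pt j).1 + ((A - 1) - (pt k).1) : ℕ) : ℤ)
        = ((pt j).1 : ℤ) + (a - 1) - (pt k).1 := by
      have := hub k; omega
    apply mem_code' hq2
    · have := hub j; have := hub k; omega
    · have := (hvb j).1; have := (hvb k).2; omega
    · rw [hcast]
      have hr : r j < r k := hjk
      simp only [r] at hr
      nlinarith [hr, hμρ]
    · rw [hcast]
      have h1 := hub k
      have h2 := (hvb j).1
      have h3 := (hvb k).2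
      have h4 : (0:ℤ) ≤ ((q:ℤ) + 1) * (pt j).2 := by positivity
      have h5 : (0:ℤ) ≤ ((q:ℤ) + 1) * ((d + q - 1 - a) - (pt k).2) := by
        apply mul_nonneg (by positivity); omega
      have h6 : ((pt k).1 : ℤ) ≤ a - 1 := by omega
      nlinarith [Int.natCast_nonneg (pt j).1]
  have h1 : ∀ j, ∑ P, c P * (f j P * g j P) ≠ 0 := by
    intro j
    have hprod : ∀ P, f j P * g j P = mono q F (A - 1) (d + q - 1 - a) P := by
      intro P
      rw [mono_mul hq1]
      congr 1
      · have := hub j; omega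
      · ring
    rw [Finset.sum_congr rfl (fun P _ => by rw [hprod P])]
    exact Lm_ne hq1 i c hker hnz (A - 1) (d + q - 1 - a) (by omega) hμρ'
  have hcore := coset_core c r rinj f g h0 h1
  have hcard : Fintype.card ι = A * E := by
    simp [hιdef]
  rw [hcard] at hcore
  have : ((A * E : ℕ) : ℤ) = a * ((q:ℤ) - a + d) := by
    push_cast
    rw [hA, hE]
  rw [← this]
  exact_mod_cast hcore

end HermAux

/-- Two-point coset bound for Hermitian codes: if `c` is orthogonal to
`C_L(D, iP + Q)` but not to `C_L(D, (i+1)P + Q)`, and `i = (d+q-2)(q+1) - a`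
with `0 ≤ a ≤ q`, then the Hamming weight of `c` is at least `(q+1)d - a + 1`
when `a - d - 1 < 0`, and at least `a(q - a + d)` when `0 ≤ a - d - 1 ≤ q - 1`. -/
theorem hermitian_two_point_coset_bound (q : ℕ) (hq : IsPrimePow q)
    (F : Type*) [Field F] [Fintype F] [DecidableEq F] (hF : Fintype.card F = q ^ 2)
    (i d a : ℤ) (hi : i = (d + q - 2) * (q + 1) - a) (ha0 : 0 ≤ a) (haq : a ≤ q)
    (c : HermitianPoints' q F → F)
    (hker : ∀ v ∈ hermitianTwoPointCode q F i, ∑ P, c P * v P = 0)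
    (hnz : ∃ w ∈ hermitianTwoPointCode q F (i + 1), ∑ P, c P * w P ≠ 0) :
    (a - d - 1 < 0 →
      (q + 1) * d - a + 1 ≤ (Nat.card {P : HermitianPoints' q F // c P ≠ 0} : ℤ)) ∧
    (0 ≤ a - d - 1 ∧ a - d - 1 ≤ (q : ℤ) - 1 →
      a * (q - a + d) ≤ (Nat.card {P : HermitianPoints' q F // c P ≠ 0} : ℤ)) := by

  have hq2 : 2 ≤ q := hq.two_le
  constructor
  · intro h1
    have := HermAux.case1 q F hq2 i d a hi ha0 haq c hker hnz (by omega)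
    convert this using 2
  · rintro ⟨h1, h2⟩
    by_cases hpos : 1 ≤ a ∧ 1 ≤ (q:ℤ) - a + d
    · have := HermAux.case2 q F hq2 i d a hi ha0 haq c hker hnz hpos.1 hpos.2
      convert this using 2
    · have hle : a * ((q:ℤ) - a + d) ≤ 0 := by
        rcases not_and_or.mp hpos with h | h
        · push_neg at h
          have ha : a = 0 := by omega
          simp [ha]
        · push_neg at h
          have : (q:ℤ) - a + d ≤ 0 := by omega
          nlinarith
      exact le_trans hle (Int.natCast_nonneg _)
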